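/- Let Y ⊆ ℝᵈ be a nonempty finite set with nondominated set Y_N, and let y ∈ conv(Y_N) satisfy conv(Y_N) ∩ (y − ℝᵈ_{≥0}) = {y} (y is on the nondominated frontier). Then there exists λ ∈ ℝᵈ with all components strictly positive such that λᵀy ≤ λᵀz for all z ∈ conv(Y_N). -/

import Mathlib

open Finset

variable {ι : Type*}

/-- Conic combinations of the vectors `v i`, `i ∈ S`. -/
def coneOf {E : Type*} [AddCommGroup E] [Module ℝ E] (v : ι → E) (S : Finset ι) : Set E :=
  {x | ∃ μ : ι → ℝ, (∀ i, 0 ≤ μ i) ∧ x = ∑ i ∈ S, μ i • v i}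

lemma coneOf_mono {E : Type*} [AddCommGroup E] [Module ℝ E] (v : ι → E) {S T : Finset ι}
    (hST : S ⊆ T) : coneOf v S ⊆ coneOf v T := by
  classical
  rintro x ⟨μ, hμ, rfl⟩
  refine ⟨fun i => if i ∈ S then μ i else 0, fun i => ?_, ?_⟩
  · dsimp only; split_ifs with h
    · exact hμ i
    · exact le_refl 0
  · dsimp only; rw [← Finset.sum_subset hST (fun i _ hiS => by rw [if_neg hiS, zero_smul])]
    exact Finset.sum_congr rfl fun i hi => by rw [if_pos hi]

lemma zero_mem_coneOf {E : Type*} [AddCommGroup E] [Module ℝ E] (v : ι → E) (S : Finset ι) :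
    (0 : E) ∈ coneOf v S :=
  ⟨0, fun i => le_refl 0, by simp⟩

lemma smul_mem_coneOf {E : Type*} [AddCommGroup E] [Module ℝ E] {v : ι → E} {S : Finset ι}
    {x : E} (hx : x ∈ coneOf v S) {t : ℝ} (ht : 0 ≤ t) : t • x ∈ coneOf v S := by
  obtain ⟨μ, hμ, rfl⟩ := hx
  exact ⟨fun i => t * μ i, fun i => mul_nonneg ht (hμ i), by
    rw [Finset.smul_sum]; exact Finset.sum_congr rfl fun i _ => by rw [smul_smul]⟩

lemma convex_coneOf {E : Type*} [AddCommGroup E] [Module ℝ E] (v : ι → E) (S : Finset ι) :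
    Convex ℝ (coneOf v S) := by
  rintro x ⟨μ, hμ, rfl⟩ x' ⟨ν, hν, rfl⟩ a b ha hb _
  refine ⟨fun i => a * μ i + b * ν i, fun i => add_nonneg (mul_nonneg ha (hμ i)) (mul_nonneg hb (hν i)), ?_⟩
  rw [Finset.smul_sum, Finset.smul_sum, ← Finset.sum_add_distrib]
  exact Finset.sum_congr rfl fun i _ => by rw [add_smul, smul_smul, smul_smul]

lemma coneOf_caratheodory {E : Type*} [AddCommGroup E] [Module ℝ E] (v : ι → E)
    (S : Finset ι) : ∀ x ∈ coneOf v S, ∃ T, T ⊆ S ∧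
      LinearIndependent ℝ (fun i : T => v i) ∧ x ∈ coneOf v T := by
  classical
  induction S using Finset.strongInduction with
  | _ S ih =>
    intro x hx
    by_cases hind : LinearIndependent ℝ (fun i : S => v i)
    · exact ⟨S, Finset.Subset.refl S, hind, hx⟩
    obtain ⟨μ, hμ, hsum⟩ := hx
    obtain ⟨g, hg0, i₁, hi₁⟩ := Fintype.not_linearIndependent_iff.mp hind
    -- a general "reduction" step, applied to `±g` extended to `ι`
    have key : ∀ h : ι → ℝ, (∑ i ∈ S, h i • v i = 0) → (∃ i ∈ S, 0 < h i) →
        ∃ T, T ⊆ S ∧ LinearIndependent ℝ (fun i : T => v i) ∧ x ∈ coneOf v T := by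
      intro h hh0 hpos
      set P : Finset ι := S.filter (fun i => 0 < h i) with hP
      have hPne : P.Nonempty := by
        obtain ⟨i, hiS, hi⟩ := hpos
        exact ⟨i, Finset.mem_filter.mpr ⟨hiS, hi⟩⟩
      obtain ⟨i₀, hi₀P, hi₀min⟩ := Finset.exists_min_image P (fun i => μ i / h i) hPne
      have hi₀S : i₀ ∈ S := (Finset.mem_filter.mp hi₀P).1
      have hhi₀ : 0 < h i₀ := (Finset.mem_filter.mp hi₀P).2
      set t : ℝ := μ i₀ / h i₀ with htdef
      have ht : 0 ≤ t := div_nonneg (hμ i₀) hhi₀.le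
      set μ' : ι → ℝ := fun i => if i ∈ S then μ i - t * h i else 0 with hμ'
      have hμ'nonneg : ∀ i, 0 ≤ μ' i := by
        intro i
        simp only [hμ']
        split_ifs with hiS
        · by_cases hhi : 0 < h i
          · have := hi₀min i (Finset.mem_filter.mpr ⟨hiS, hhi⟩)
            have := (le_div_iff₀ hhi).mp this
            linarith
          · push_neg at hhi
            nlinarith [hμ i]
        · exact le_refl 0
      have hμ'i₀ : μ' i₀ = 0 := by
        simp only [hμ', if_pos hi₀S, htdef]
        field_simp
        ring
      have hxsum : x = ∑ i ∈ S, μ' i • v i := by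
        have : ∑ i ∈ S, μ' i • v i = ∑ i ∈ S, μ i • v i - t • ∑ i ∈ S, h i • v i := by
          rw [Finset.smul_sum, ← Finset.sum_sub_distrib]
          refine Finset.sum_congr rfl fun i hi => ?_
          rw [hμ']; simp only [if_pos hi]
          rw [sub_smul, smul_smul]
        rw [this, hh0, smul_zero, sub_zero, hsum]
      have hx' : x ∈ coneOf v (S.erase i₀) := by
        refine ⟨μ', hμ'nonneg, ?_⟩
        rw [hxsum, ← Finset.sum_erase S (by rw [hμ'i₀, zero_smul])]
      obtain ⟨T, hT, hTind, hxT⟩ := ih (S.erase i₀) (Finset.erase_ssubset hi₀S) x hx'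
      exact ⟨T, hT.trans (Finset.erase_subset _ _), hTind, hxT⟩
    set g' : ι → ℝ := fun i => if hi : i ∈ S then g ⟨i, hi⟩ else 0 with hg'
    have hg'sum : ∑ i ∈ S, g' i • v i = 0 := by
      rw [← Finset.sum_coe_sort S (fun i => g' i • v i)]
      rw [← hg0]
      exact Finset.sum_congr rfl fun i _ => by rw [hg']; simp [i.2]
    rcases lt_trichotomy (g i₁) 0 with hneg | hzero | hposs
    · refine key (fun i => -g' i) ?_ ⟨i₁, i₁.2, ?_⟩
      · simp only [neg_smul, Finset.sum_neg_distrib, hg'sum, neg_zero]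
      · simp only [hg', dif_pos i₁.2, Subtype.coe_eta]
        exact neg_pos.mpr hneg
    · exact absurd hzero hi₁
    · refine key g' hg'sum ⟨i₁, i₁.2, ?_⟩
      simp only [hg', dif_pos i₁.2, Subtype.coe_eta]
      exact hposs

lemma isClosed_coneOf_of_linearIndependent {d : ℕ} (v : ι → (Fin d → ℝ)) (S : Finset ι)
    (h : LinearIndependent ℝ (fun i : S => v i)) : IsClosed (coneOf v S) := by
  classical
  set φ : (S → ℝ) →ₗ[ℝ] (Fin d → ℝ) := Fintype.linearCombination ℝ (fun i : S => v i) with hφ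
  have hker : LinearMap.ker φ = ⊥ := by
    rw [LinearMap.ker_eq_bot']
    intro g hg
    rw [hφ, Fintype.linearCombination_apply] at hg
    funext i
    exact Fintype.linearIndependent_iff.mp h g hg i
  have hemb : Topology.IsClosedEmbedding φ := LinearMap.isClosedEmbedding_of_injective hker
  have himg : coneOf v S = φ '' {g : S → ℝ | ∀ i, 0 ≤ g i} := by
    ext x
    constructor
    · rintro ⟨μ, hμ, rfl⟩
      refine ⟨fun i => μ i, fun i => hμ i, ?_⟩
      rw [hφ, Fintype.linearCombination_apply]
      exact Finset.sum_coe_sort S (fun i => μ i • v i)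
    · rintro ⟨g, hg, rfl⟩
      refine ⟨fun i => if hi : i ∈ S then g ⟨i, hi⟩ else 0, fun i => ?_, ?_⟩
      · dsimp only; split_ifs with hi
        · exact hg _
        · exact le_refl 0
      · rw [hφ, Fintype.linearCombination_apply,
          ← Finset.sum_coe_sort S (fun i => (if hi : i ∈ S then g ⟨i, hi⟩ else 0) • v i)]
        exact (Finset.sum_congr rfl fun i _ => by simp [i.2]).symm
  rw [himg]
  apply hemb.isClosedMap
  have : {g : S → ℝ | ∀ i, 0 ≤ g i} = ⋂ i, {g : S → ℝ | 0 ≤ g i} := by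
    ext g; simp [Set.mem_iInter]
  rw [this]
  exact isClosed_iInter fun i => isClosed_le continuous_const (continuous_apply i)

lemma isClosed_coneOf {d : ℕ} (v : ι → (Fin d → ℝ)) (V : Finset ι) :
    IsClosed (coneOf v V) := by
  classical
  have hE : coneOf v V = ⋃ S ∈ V.powerset,
      (if LinearIndependent ℝ (fun i : S => v i) then coneOf v S else {0}) := by
    ext x
    constructor
    · intro hx
      obtain ⟨T, hT, hind, hxT⟩ := coneOf_caratheodory v V x hx
      exact Set.mem_biUnion (Finset.mem_powerset.mpr hT) (by rw [if_pos hind]; exact hxT)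
    · intro hx
      obtain ⟨S, hS, hxS⟩ := Set.mem_iUnion₂.mp hx
      by_cases hind : LinearIndependent ℝ (fun i : S => v i)
      · rw [if_pos hind] at hxS
        exact coneOf_mono v (Finset.mem_powerset.mp hS) hxS
      · rw [if_neg hind] at hxS
        rw [hxS]
        exact zero_mem_coneOf v V
  rw [hE]
  apply Set.Finite.isClosed_biUnion (V.powerset.finite_toSet)
  intro S _
  split_ifs with hind
  · exact isClosed_coneOf_of_linearIndependent v S hind
  · exact isClosed_singleton

lemma farkas_coneOf {d : ℕ} (v : ι → (Fin d → ℝ)) (V : Finset ι) (b : Fin d → ℝ)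
    (hb : b ∉ coneOf v V) :
    ∃ f : (Fin d → ℝ) →L[ℝ] ℝ, (∀ x ∈ coneOf v V, 0 ≤ f x) ∧ f b < 0 := by
  obtain ⟨f, u, hfK, hub⟩ := geometric_hahn_banach_closed_point
    (convex_coneOf v V) (isClosed_coneOf v V) hb
  have hu0 : 0 < u := by
    have := hfK 0 (zero_mem_coneOf v V)
    simpa using this
  have hfle : ∀ x ∈ coneOf v V, f x ≤ 0 := by
    intro x hx
    by_contra hpos
    push_neg at hpos
    have h1 : ((u + 1) / f x) • x ∈ coneOf v V :=
      smul_mem_coneOf hx (by positivity)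
    have := hfK _ h1
    rw [map_smul, smul_eq_mul, div_mul_cancel₀ _ (ne_of_gt hpos)] at this
    linarith
  exact ⟨-f, fun x hx => by simpa using hfle x hx, by simpa using lt_trans hu0 hub⟩

theorem stmt_8 (d : ℕ) (Y : Set (Fin d → ℝ)) (hfin : Y.Finite) (hne : Y.Nonempty)
    (y : Fin d → ℝ)
    (hy : y ∈ convexHull ℝ {v ∈ Y | ¬ ∃ y' ∈ Y, y' ≤ v ∧ y' ≠ v})
    (hfront : convexHull ℝ {v ∈ Y | ¬ ∃ y' ∈ Y, y' ≤ v ∧ y' ≠ v} ∩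
      {z : Fin d → ℝ | ∃ r : Fin d → ℝ, 0 ≤ r ∧ z = y - r} = {y}) :
    ∃ l : Fin d → ℝ, (∀ i, 0 < l i) ∧
      ∀ z ∈ convexHull ℝ {v ∈ Y | ¬ ∃ y' ∈ Y, y' ≤ v ∧ y' ≠ v},
        (∑ i, l i * y i) ≤ ∑ i, l i * z i := by
  classical
  set N : Set (Fin d → ℝ) := {v ∈ Y | ¬ ∃ y' ∈ Y, y' ≤ v ∧ y' ≠ v} with hNdef
  have hNfin : N.Finite := hfin.subset (Set.sep_subset _ _)
  set NF : Finset (Fin d → ℝ) := hNfin.toFinset with hNFdef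
  set e : Fin d → (Fin d → ℝ) := fun j => Pi.single j 1 with he
  set v : (Fin d ⊕ (Fin d → ℝ)) → (Fin d → ℝ) := Sum.elim e (fun n => n - y) with hv
  set A : Finset (Fin d ⊕ (Fin d → ℝ)) := Finset.univ.image Sum.inl with hA
  set B : Finset (Fin d ⊕ (Fin d → ℝ)) := NF.image Sum.inr with hB
  set V : Finset (Fin d ⊕ (Fin d → ℝ)) := A ∪ B with hV
  have hdisj : Disjoint A B := by
    rw [Finset.disjoint_left]
    rintro a ha hb
    rw [hA, Finset.mem_image] at ha
    rw [hB, Finset.mem_image] at hb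
    obtain ⟨j, _, rfl⟩ := ha
    obtain ⟨n, _, h⟩ := hb
    exact Sum.inl_ne_inr h.symm
  have hdecomp : ∀ μ : (Fin d ⊕ (Fin d → ℝ)) → ℝ,
      ∑ x ∈ V, μ x • v x = (∑ j, μ (Sum.inl j) • e j) +
        ∑ n ∈ NF, μ (Sum.inr n) • (n - y) := by
    intro μ
    rw [hV, Finset.sum_union hdisj, hA, hB,
      Finset.sum_image (fun a _ b _ h => Sum.inl_injective h),
      Finset.sum_image (fun a _ b _ h => Sum.inr_injective h)]
    rfl
  -- basic membership facts
  have he_mem : ∀ j, e j ∈ coneOf v V := by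
    intro j
    refine ⟨fun a => if a = Sum.inl j then 1 else 0, fun a => by dsimp only; split_ifs <;> norm_num, ?_⟩
    have h1 : ∀ x ∈ V, ((if x = Sum.inl j then (1:ℝ) else 0) • v x)
        = (if x = Sum.inl j then v x else 0) := by
      intro x _; split_ifs <;> simp
    rw [Finset.sum_congr rfl h1, Finset.sum_ite_eq' V (Sum.inl j) v,
      if_pos (Finset.mem_union_left _ (Finset.mem_image_of_mem _ (Finset.mem_univ j)))]
    simp [hv]
  have hn_mem : ∀ n ∈ NF, (n - y) ∈ coneOf v V := by
    intro n hn
    refine ⟨fun a => if a = Sum.inr n then 1 else 0, fun a => by dsimp only; split_ifs <;> norm_num, ?_⟩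
    have h1 : ∀ x ∈ V, ((if x = Sum.inr n then (1:ℝ) else 0) • v x)
        = (if x = Sum.inr n then v x else 0) := by
      intro x _; split_ifs <;> simp
    rw [Finset.sum_congr rfl h1, Finset.sum_ite_eq' V (Sum.inr n) v,
      if_pos (Finset.mem_union_right _ (Finset.mem_image_of_mem _ hn))]
    simp [hv]
  -- the key step : -(e i) is not in the cone
  have hstep : ∀ i, -(e i) ∉ coneOf v V := by
    intro i hcon
    obtain ⟨μ, hμ, hsum⟩ := hcon
    rw [hdecomp μ] at hsum
    set s : Fin d → ℝ := fun j => μ (Sum.inl j) with hs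
    set c : (Fin d → ℝ) → ℝ := fun n => μ (Sum.inr n) with hc
    have hks : ∀ k, -(if k = i then (1:ℝ) else 0)
        = s k + ∑ n ∈ NF, c n * (n k - y k) := by
      intro k
      have := congrFun hsum k
      simp only [he, Pi.neg_apply, Pi.single_apply, Pi.add_apply, Finset.sum_apply,
        Pi.smul_apply, Pi.sub_apply, smul_eq_mul] at this
      rw [this]
      congr 1
      rw [Finset.sum_congr rfl (fun j _ => by rw [mul_ite, mul_one, mul_zero]),
        Finset.sum_ite_eq Finset.univ k s, if_pos (Finset.mem_univ k)]
    set M : ℝ := ∑ n ∈ NF, c n with hM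
    have hMnonneg : 0 ≤ M := Finset.sum_nonneg fun n _ => hμ _
    rcases eq_or_lt_of_le hMnonneg with hM0 | hMpos
    · have hcz : ∀ n ∈ NF, c n = 0 := by
        intro n hn
        exact (Finset.sum_eq_zero_iff_of_nonneg (fun m _ => hμ _)).mp hM0.symm n hn
      have := hks i
      rw [if_pos rfl, Finset.sum_congr rfl (fun n hn => by rw [hcz n hn, zero_mul]),
        Finset.sum_const_zero] at this
      have hsi : (0:ℝ) ≤ s i := hμ (Sum.inl i)
      linarith
    · set z : Fin d → ℝ := NF.centerMass c id with hz
      have hzC : z ∈ convexHull ℝ N :=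
        Finset.centerMass_mem_convexHull NF (fun n _ => hμ _) hMpos
          (fun n hn => hNfin.mem_toFinset.mp hn)
      set r : Fin d → ℝ := fun k => M⁻¹ * ((if k = i then 1 else 0) + s k) with hr
      have hrnonneg : (0 : Fin d → ℝ) ≤ r := by
        rw [Pi.le_def]
        intro k
        simp only [Pi.zero_apply]
        have h1 : (0:ℝ) ≤ (if k = i then (1:ℝ) else 0) := by split_ifs <;> norm_num
        have h2 : (0:ℝ) ≤ s k := hμ (Sum.inl k)
        have h3 : (0:ℝ) ≤ M⁻¹ := inv_nonneg.mpr hMnonneg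
        show (0:ℝ) ≤ M⁻¹ * ((if k = i then 1 else 0) + s k)
        nlinarith
      have hzyr : z = y - r := by
        funext k
        have hksk := hks k
        have h2 : ∑ n ∈ NF, c n * (n k - y k) = (∑ n ∈ NF, c n * n k) - M * y k := by
          rw [Finset.sum_mul, ← Finset.sum_sub_distrib]
          exact Finset.sum_congr rfl fun n _ => by ring
        rw [h2] at hksk
        have hzk : z k = M⁻¹ * ∑ n ∈ NF, c n * n k := by
          rw [hz, Finset.centerMass]
          simp only [Pi.smul_apply, Finset.sum_apply, smul_eq_mul, id]
          try rw [← hM]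
        have hsumk : ∑ n ∈ NF, c n * n k = M * y k - (if k = i then 1 else 0) - s k := by
          linarith
        rw [hzk, hsumk, hr]
        simp only [Pi.sub_apply]
        have hMne : M ≠ 0 := ne_of_gt hMpos
        field_simp
        try ring
      have hzy : z = y := by
        have : z ∈ ({y} : Set (Fin d → ℝ)) := by
          rw [← hfront]
          exact ⟨hzC, ⟨r, hrnonneg, hzyr⟩⟩
        exact this
      have hri : r i = 0 := by
        have := congrFun hzy i
        rw [hzyr] at this
        simp only [Pi.sub_apply] at this
        linarith [congrFun hzyr i]
      rw [hr] at hri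
      simp only [eq_self_iff_true, if_true] at hri
      have hsi : (0:ℝ) ≤ s i := hμ (Sum.inl i)
      have hMinv : 0 < M⁻¹ := inv_pos.mpr hMpos
      nlinarith
  -- Farkas for each coordinate
  have hfar : ∀ i : Fin d, ∃ f : (Fin d → ℝ) →L[ℝ] ℝ,
      (∀ x ∈ coneOf v V, 0 ≤ f x) ∧ f (-(e i)) < 0 :=
    fun i => farkas_coneOf v V _ (hstep i)
  choose f hfK hfneg using hfar
  have hfe : ∀ i j, 0 ≤ f i (e j) := fun i j => hfK i _ (he_mem j)
  have hfipos : ∀ i, 0 < f i (e i) := by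
    intro i
    have := hfneg i
    rw [map_neg] at this
    linarith
  refine ⟨fun j => ∑ i, f i (e j), fun j =>
    Finset.sum_pos' (fun i _ => hfe i j) ⟨j, Finset.mem_univ j, hfipos j⟩, ?_⟩
  -- representation of linear functionals as coordinate sums
  have hxrep : ∀ x : Fin d → ℝ, x = ∑ j, x j • e j := by
    intro x
    funext k
    simp only [Finset.sum_apply, Pi.smul_apply, he, Pi.single_apply, smul_eq_mul]
    rw [Finset.sum_congr rfl (fun j _ => by rw [mul_ite, mul_one, mul_zero]),
      Finset.sum_ite_eq Finset.univ k x, if_pos (Finset.mem_univ k)]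
  have hrep : ∀ x : Fin d → ℝ, ∑ j, (∑ i, f i (e j)) * x j = ∑ i, f i x := by
    intro x
    have h1 : ∀ i : Fin d, f i x = ∑ j, x j * f i (e j) := by
      intro i
      conv_lhs => rw [hxrep x]
      rw [map_sum]
      exact Finset.sum_congr rfl fun j _ => by rw [map_smul, smul_eq_mul]
    calc ∑ j, (∑ i, f i (e j)) * x j
        = ∑ j, ∑ i, x j * f i (e j) := Finset.sum_congr rfl fun j _ => by
          rw [Finset.sum_mul]; exact Finset.sum_congr rfl fun i _ => by ring
      _ = ∑ i, ∑ j, x j * f i (e j) := Finset.sum_comm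
      _ = ∑ i, f i x := Finset.sum_congr rfl fun i _ => (h1 i).symm
  -- the halfspace contains the convex hull
  have hsupport : ∀ z ∈ convexHull ℝ N, ∑ i, f i y ≤ ∑ i, f i z := by
    have hconv : Convex ℝ {x : Fin d → ℝ | ∑ i, f i y ≤ ∑ i, f i x} := by
      rintro x hx x' hx' a b ha hb hab
      simp only [Set.mem_setOf_eq] at hx hx' ⊢
      have : ∀ i : Fin d, f i (a • x + b • x') = a * f i x + b * f i x' := by
        intro i; rw [map_add, map_smul, map_smul, smul_eq_mul, smul_eq_mul]
      rw [Finset.sum_congr rfl fun i _ => this i, Finset.sum_add_distrib,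
        ← Finset.mul_sum, ← Finset.mul_sum]
      have e1 : a * (∑ i, f i y) + b * (∑ i, f i y) = ∑ i, f i y := by
        rw [← add_mul, hab, one_mul]
      linarith [mul_le_mul_of_nonneg_left hx ha, mul_le_mul_of_nonneg_left hx' hb]
    have hNsub : N ⊆ {x : Fin d → ℝ | ∑ i, f i y ≤ ∑ i, f i x} := by
      intro n hn
      have hnK : n - y ∈ coneOf v V := hn_mem n (hNfin.mem_toFinset.mpr hn)
      have h0 : 0 ≤ ∑ i, f i (n - y) := Finset.sum_nonneg fun i _ => hfK i _ hnK
      simp only [Set.mem_setOf_eq]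
      have : ∑ i, f i (n - y) = (∑ i, f i n) - ∑ i, f i y := by
        rw [← Finset.sum_sub_distrib]
        exact Finset.sum_congr rfl fun i _ => by rw [map_sub]
      linarith
    exact fun z hz => convexHull_min hNsub hconv hz
  intro z hz
  rw [hrep y, hrep z]
  exact hsupport z hz
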